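/- Let p be an odd prime and n a positive integer. Then v_p((n!)²/(2n+1)!) ≥ −2n/(p−1), as an inequality of rational numbers, and equality holds if and only if n = (p−1)/2. -/

import Mathlib

lemma aux_digits_sum_pos {p : ℕ} (hp : 1 < p) : ∀ m, 0 < m → 0 < (p.digits m).sum := by
  intro m
  induction m using Nat.strong_induction_on with
  | _ m ih =>
    intro hm
    rw [Nat.digits_def' hp hm]
    simp only [List.sum_cons]
    rcases Nat.eq_zero_or_pos (m % p) with h | h
    · have hd : p ∣ m := Nat.dvd_of_mod_eq_zero h
      have h2 : 0 < m / p := Nat.div_pos (Nat.le_of_dvd hm hd) (by omega)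
      have h3 : m / p < m := Nat.div_lt_self hm hp
      have := ih (m / p) h3 h2
      omega
    · omega

lemma aux_digit_sum_lt {p m : ℕ} (hp : 1 < p) (hm : p ≤ m) : (p.digits m).sum < m := by
  rw [Nat.digits_def' hp (by omega)]
  simp only [List.sum_cons]
  have h1 : (p.digits (m / p)).sum ≤ m / p := Nat.digit_sum_le p (m / p)
  have h2 : 1 ≤ m / p := Nat.one_le_div_iff (by omega) |>.mpr hm
  have h3 : p * (m / p) + m % p = m := Nat.div_add_mod m p
  nlinarith [Nat.mod_lt m (show 0 < p by omega)]

theorem padicValRat_factorial_sq_div_ge (p : ℕ) (hp : p.Prime) (hodd : p ≠ 2) (n : ℕ)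
    (hn : 1 ≤ n) :
    -(2 * (n : ℚ) / ((p : ℚ) - 1)) ≤
        ((padicValRat p (((n.factorial : ℚ)) ^ 2 / ((2 * n + 1).factorial : ℚ)) : ℚ)) ∧
      (((padicValRat p (((n.factorial : ℚ)) ^ 2 / ((2 * n + 1).factorial : ℚ)) : ℚ)) =
          -(2 * (n : ℚ) / ((p : ℚ) - 1)) ↔ n = (p - 1) / 2) := by
  haveI : Fact p.Prime := ⟨hp⟩
  have hp1 : 1 < p := hp.one_lt
  have hp3 : 3 ≤ p := by have := hp.two_le; omega
  set a := padicValNat p n.factorial with ha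
  set b := padicValNat p (2 * n + 1).factorial with hb
  set s := (p.digits n).sum with hs
  set t := (p.digits (2 * n + 1)).sum with ht
  have hq1 : ((n.factorial : ℚ)) ^ 2 ≠ 0 := pow_ne_zero _ (Nat.cast_ne_zero.mpr n.factorial_ne_zero)
  have hq2 : ((2 * n + 1).factorial : ℚ) ≠ 0 := Nat.cast_ne_zero.mpr (Nat.factorial_ne_zero _)
  have hval : padicValRat p (((n.factorial : ℚ)) ^ 2 / ((2 * n + 1).factorial : ℚ))
      = 2 * (a : ℤ) - (b : ℤ) := by
    rw [padicValRat.div hq1 hq2, padicValRat.pow,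
      padicValRat.of_nat, padicValRat.of_nat]
    norm_cast
  -- Legendre
  have hsn : s ≤ n := Nat.digit_sum_le p n
  have htm : t ≤ 2 * n + 1 := Nat.digit_sum_le p (2 * n + 1)
  have ht1 : 1 ≤ t := aux_digits_sum_pos hp1 (2 * n + 1) (by omega)
  have hleg1 : (p - 1) * a = n - s := sub_one_mul_padicValNat_factorial n
  have hleg2 : (p - 1) * b = (2 * n + 1) - t := sub_one_mul_padicValNat_factorial (2 * n + 1)
  have key : ((p : ℤ) - 1) * (2 * (a : ℤ) - (b : ℤ)) = (t : ℤ) - 2 * s - 1 := by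
    have e1 : ((p : ℤ) - 1) * a = (n : ℤ) - s := by
      have := congrArg (Nat.cast : ℕ → ℤ) hleg1
      push_cast [Nat.cast_sub hsn, Nat.cast_sub hp.one_le] at this
      linarith
    have e2 : ((p : ℤ) - 1) * b = 2 * (n : ℤ) + 1 - t := by
      have := congrArg (Nat.cast : ℕ → ℤ) hleg2
      push_cast [Nat.cast_sub htm, Nat.cast_sub hp.one_le] at this
      linarith
    linarith [e1, e2]
  have hppos : (0 : ℚ) < (p : ℚ) - 1 := by
    have : (1 : ℚ) < (p : ℚ) := by exact_mod_cast hp1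
    linarith
  have keyQ : ((p : ℚ) - 1) * (2 * (a : ℚ) - (b : ℚ)) = (t : ℚ) - 2 * s - 1 := by
    exact_mod_cast congrArg (Int.cast : ℤ → ℚ) key
  rw [hval]
  push_cast
  constructor
  · rw [← neg_div, div_le_iff₀ hppos]
    have hnat : 2 * s + 1 ≤ 2 * n + t := by omega
    have : (2 * (s : ℚ) + 1) ≤ 2 * (n : ℚ) + t := by exact_mod_cast hnat
    nlinarith [keyQ]
  · rw [← neg_div, eq_div_iff hppos.ne']
    have step1 : (2 * (a : ℚ) - (b : ℚ)) * ((p : ℚ) - 1) = -(2 * (n : ℚ)) ↔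
        t + 2 * n = 2 * s + 1 := by
      constructor
      · intro h
        have : (t : ℚ) + 2 * n = 2 * (s : ℚ) + 1 := by nlinarith [keyQ]
        exact_mod_cast this
      · intro h
        have : (t : ℚ) + 2 * n = 2 * (s : ℚ) + 1 := by exact_mod_cast h
        nlinarith [keyQ]
    rw [step1]
    constructor
    · intro h
      have hsn' : s = n := by omega
      have ht' : t = 1 := by omega
      -- n < p
      have hnp : n < p := by
        by_contra hcon
        have := aux_digit_sum_lt hp1 (show p ≤ n by omega)
        omega
      rcases lt_or_ge (2 * n + 1) p with hlt | hge
      · -- then t = 2n+1 = 1, contradiction with n ≥ 1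
        have : p.digits (2 * n + 1) = [2 * n + 1] := Nat.digits_of_lt p _ (by omega) hlt
        rw [ht, this] at ht'
        simp at ht'
        omega
      · have hq : (2 * n + 1) / p = 1 := by
          apply Nat.div_eq_of_lt_le <;> omega
        have hdig : p.digits (2 * n + 1) = (2 * n + 1) % p :: p.digits ((2 * n + 1) / p) :=
          Nat.digits_def' hp1 (by omega)
        rw [hq] at hdig
        have h1 : p.digits 1 = [1] := Nat.digits_of_lt p 1 (by omega) (by omega)
        rw [ht, hdig, h1] at ht'
        simp at ht'
        have hdm := Nat.div_add_mod (2 * n + 1) p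
        rw [hq] at hdm
        omega
    · intro h
      have hoddp : p % 2 = 1 := Nat.odd_iff.mp (hp.odd_of_ne_two hodd)
      have h2n : 2 * n + 1 = p := by omega
      have hsn' : s = n := by
        rw [hs, Nat.digits_of_lt p n (by omega) (by omega)]
        simp
      have ht' : t = 1 := by
        rw [ht, h2n, Nat.digits_def' hp1 (by omega : 0 < p), Nat.mod_self,
          Nat.div_self (by omega : 0 < p), Nat.digits_of_lt p 1 (by omega) (by omega)]
        simp
      omega
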